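/- arXiv:0907.5079 — 5 statements merged into one kernel-verified Lean document; each statement's English description precedes it below -/
import Mathlib

section
/- Let Γ be a group acting on the right on a finite graph T and on the left on a finite graph H, and let G be a finite graph. Let Γ act on the exponential graph G^T on the left by (γ·f)(t) = f(t·γ), and hence act on the poset Hom(H, G^T) by (γ·α)(h) = γ·α(γ^{-1}·h); let Hom_Γ(H, G^T) be the subposet of fixed points of this action. Then there exist order-preserving maps φ : Hom(T ×_Γ H, G) → Hom_Γ(H, G^T) and ψ : Hom_Γ(H, G^T) → Hom(T ×_Γ H, G) with ψ∘φ = id and φ(ψ(β)) ≥ β for all β; in particular φ is injective and its image is the image of the closure map φ∘ψ on Hom_Γ(H, G^T), so Hom(T ×_Γ H, G) embeds as a strong deformation retract of Hom_Γ(H, G^T). -/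
/-- A graph: a vertex set with a symmetric adjacency relation (loops allowed). -/
structure LGraph (V : Type) where
  Adj : V → V → Prop
  symm : ∀ x y, Adj x y → Adj y x

/-- Multihomomorphisms from `G` to `H`. -/
def LGraph.IsMultiHom {V W : Type} (G : LGraph V) (H : LGraph W) (α : V → Set W) : Prop :=
  (∀ v, (α v).Nonempty) ∧ ∀ v w, G.Adj v w → ∀ x ∈ α v, ∀ y ∈ α w, H.Adj x y

/-- The Hom poset `Hom(G,H)`. -/
def HomPoset {V W : Type} (G : LGraph V) (H : LGraph W) : Type :=
  {α : V → Set W // G.IsMultiHom H α}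

instance {V W : Type} (G : LGraph V) (H : LGraph W) : PartialOrder (HomPoset G H) :=
  Subtype.partialOrder _

/-- The categorical product of graphs. -/
def LGraph.prod {V W : Type} (G : LGraph V) (H : LGraph W) : LGraph (V × W) where
  Adj a b := G.Adj a.1 b.1 ∧ H.Adj a.2 b.2
  symm _ _ h := ⟨G.symm _ _ h.1, H.symm _ _ h.2⟩

/-- The exponential graph `G^T`. -/
def LGraph.exp {VT VG : Type} (T : LGraph VT) (G : LGraph VG) : LGraph (VT → VG) where
  Adj f f' := ∀ v w, T.Adj v w → G.Adj (f v) (f' w)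
  symm f f' h v w hvw := G.symm _ _ (h w v (T.symm _ _ hvw))

section Twisted

variable {Γ VT VH VG : Type} [Group Γ]

/-- The orbit relation of the diagonal action `γ·(t,h) = (t·γ⁻¹, γ·h)` on `T × H`. -/
def twRel (actT : VT → Γ → VT) (actH : Γ → VH → VH) (a b : VT × VH) : Prop :=
  ∃ γ : Γ, b = (actT a.1 γ⁻¹, actH γ a.2)

/-- The twisted product graph `T ×_Γ H`. -/
def twProd (T : LGraph VT) (H : LGraph VH) (actT : VT → Γ → VT) (actH : Γ → VH → VH) :
    LGraph (Quot (twRel actT actH)) where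
  Adj X Y := ∃ a b, Quot.mk _ a = X ∧ Quot.mk _ b = Y ∧ (T.prod H).Adj a b
  symm X Y h := by
    obtain ⟨a, b, ha, hb, hab⟩ := h
    exact ⟨b, a, hb, ha, (T.prod H).symm _ _ hab⟩

/-- The action of `γ ∈ Γ` on `Hom(H, G^T)`, `(γ·α)(h) = γ·(α(γ⁻¹·h))`, where `Γ`
acts on `G^T` on the left by `(γ·f)(t) = f(t·γ)`. -/
def homActExp (T : LGraph VT) (H : LGraph VH) (G : LGraph VG)
    (actT : VT → Γ → VT) (actH : Γ → VH → VH)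
    (hTadj : ∀ (γ : Γ) t t', T.Adj t t' → T.Adj (actT t γ) (actT t' γ))
    (hHadj : ∀ (γ : Γ) h h', H.Adj h h' → H.Adj (actH γ h) (actH γ h'))
    (γ : Γ) (α : HomPoset H (T.exp G)) : HomPoset H (T.exp G) :=
  ⟨fun h => (fun f t => f (actT t γ)) '' α.1 (actH γ⁻¹ h),
   ⟨fun h => (α.2.1 _).image _,
    fun h h' hhh' x hx y hy => by
      obtain ⟨f, hf, rfl⟩ := hx
      obtain ⟨g, hg, rfl⟩ := hy
      intro v w hvw
      exact α.2.2 _ _ (hHadj γ⁻¹ _ _ hhh') f hf g hg _ _ (hTadj γ _ _ hvw)⟩⟩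

end Twisted

/-- `Hom(T ×_Γ H, G)` embeds into the fixed-point poset
`Hom_Γ(H, G^T)` as (the image of a closure map, hence as) a strong deformation
retract: there are order-preserving `φ`, `ψ` with `ψ ∘ φ = id` and `φ(ψ(β)) ≥ β`;
in particular `φ` is injective. -/
theorem stmt_1 {Γ VT VH VG : Type} [Group Γ] [Fintype VT] [Fintype VH] [Fintype VG]
    (T : LGraph VT) (H : LGraph VH) (G : LGraph VG)
    (actT : VT → Γ → VT)
    (hT1 : ∀ t, actT t 1 = t)
    (hTmul : ∀ t (γ δ : Γ), actT t (γ * δ) = actT (actT t γ) δ)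
    (hTadj : ∀ (γ : Γ) t t', T.Adj t t' → T.Adj (actT t γ) (actT t' γ))
    (actH : Γ → VH → VH)
    (hH1 : ∀ h, actH 1 h = h)
    (hHmul : ∀ (γ δ : Γ) h, actH (γ * δ) h = actH γ (actH δ h))
    (hHadj : ∀ (γ : Γ) h h', H.Adj h h' → H.Adj (actH γ h) (actH γ h')) :
    ∃ (φ : HomPoset (twProd T H actT actH) G →o
        {α : HomPoset H (T.exp G) // ∀ γ : Γ, homActExp T H G actT actH hTadj hHadj γ α = α})
      (ψ : {α : HomPoset H (T.exp G) // ∀ γ : Γ, homActExp T H G actT actH hTadj hHadj γ α = α}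
        →o HomPoset (twProd T H actT actH) G),
      (∀ α, ψ (φ α) = α) ∧ (∀ β, β ≤ φ (ψ β)) ∧ Function.Injective φ := by
  classical
  set R := twRel actT actH with hR
  -- key orbit lemma
  have key : ∀ (γ : Γ) (t : VT) (h : VH),
      Quot.mk R (actT t γ, actH γ⁻¹ h) = Quot.mk R (t, h) := by
    intro γ t h
    refine (Quot.sound ?_).symm
    exact ⟨γ⁻¹, by rw [inv_inv]⟩
  have hHcancel : ∀ (γ : Γ) (h : VH), actH γ⁻¹ (actH γ h) = h := by
    intro γ h; rw [← hHmul, inv_mul_cancel, hH1]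
  have hHcancel' : ∀ (γ : Γ) (h : VH), actH γ (actH γ⁻¹ h) = h := by
    intro γ h; rw [← hHmul, mul_inv_cancel, hH1]
  have hTcancel : ∀ (γ : Γ) (t : VT), actT (actT t γ⁻¹) γ = t := by
    intro γ t; rw [← hTmul, inv_mul_cancel, hT1]
  have hTcancel' : ∀ (γ : Γ) (t : VT), actT (actT t γ) γ⁻¹ = t := by
    intro γ t; rw [← hTmul, mul_inv_cancel, hT1]
  -- φ underlying function
  let phiFun : HomPoset (twProd T H actT actH) G → VH → Set (VT → VG) :=
    fun α h => {f | ∀ t, f t ∈ α.1 (Quot.mk R (t, h))}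
  have phiMH : ∀ α, LGraph.IsMultiHom H (T.exp G) (phiFun α) := by
    intro α
    constructor
    · intro h
      exact ⟨fun t => (α.2.1 (Quot.mk R (t, h))).some,
        fun t => (α.2.1 (Quot.mk R (t, h))).some_mem⟩
    · intro h h' hhh' f hf g hg v w hvw
      exact α.2.2 _ _ ⟨(v, h), (w, h'), rfl, rfl, hvw, hhh'⟩ _ (hf v) _ (hg w)
  have phiFix : ∀ α (γ : Γ),
      homActExp T H G actT actH hTadj hHadj γ ⟨phiFun α, phiMH α⟩ = ⟨phiFun α, phiMH α⟩ := by
    intro α γ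
    apply Subtype.ext
    funext h
    ext x
    constructor
    · rintro ⟨f, hf, rfl⟩
      intro t
      have := hf (actT t γ)
      rwa [key γ t h] at this
    · intro hx
      refine ⟨fun s => x (actT s γ⁻¹), ?_, ?_⟩
      · intro s
        have h1 : Quot.mk R (actT s γ⁻¹, h) = Quot.mk R (s, actH γ⁻¹ h) := by
          have := key γ⁻¹ s (actH γ⁻¹ h)
          rwa [inv_inv, hHcancel'] at this
        exact h1 ▸ hx (actT s γ⁻¹)
      · funext t
        simp only [hTcancel']
  -- ψ underlying function on pairs
  let psiVal : {α : HomPoset H (T.exp G) //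
      ∀ γ : Γ, homActExp T H G actT actH hTadj hHadj γ α = α} → VT × VH → Set VG :=
    fun β p => (fun f => f p.1) '' β.1.1 p.2
  have psiInv : ∀ β a b, R a b → psiVal β a = psiVal β b := by
    intro β a b hab
    obtain ⟨γ, rfl⟩ := hab
    have hfix := congrArg Subtype.val (β.2 γ)
    have hfix2 : (fun f (t : VT) => f (actT t γ)) '' β.1.1 (actH γ⁻¹ (actH γ a.2))
        = β.1.1 (actH γ a.2) := congrFun hfix (actH γ a.2)
    rw [hHcancel] at hfix2
    ext x
    constructor
    · rintro ⟨f, hf, rfl⟩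
      refine ⟨fun t => f (actT t γ), hfix2 ▸ ⟨f, hf, rfl⟩, ?_⟩
      simp only [hTcancel]
    · rintro ⟨f, hf, rfl⟩
      rw [← hfix2] at hf
      obtain ⟨g, hg, rfl⟩ := hf
      exact ⟨g, hg, by simp only [hTcancel]⟩
  let psiFun : {α : HomPoset H (T.exp G) //
      ∀ γ : Γ, homActExp T H G actT actH hTadj hHadj γ α = α} →
      Quot R → Set VG :=
    fun β => Quot.lift (psiVal β) (psiInv β)
  have psiMH : ∀ β, LGraph.IsMultiHom (twProd T H actT actH) G (psiFun β) := by
    intro β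
    constructor
    · intro X
      induction X using Quot.ind with
      | _ a =>
        obtain ⟨f, hf⟩ := β.1.2.1 a.2
        exact ⟨f a.1, f, hf, rfl⟩
    · rintro X Y ⟨a, b, rfl, rfl, hab⟩ x hx y hy
      obtain ⟨f, hf, rfl⟩ := hx
      obtain ⟨g, hg, rfl⟩ := hy
      exact β.1.2.2 _ _ hab.2 f hf g hg _ _ hab.1
  -- retraction identity
  have hret : ∀ α : HomPoset (twProd T H actT actH) G,
      (⟨psiFun ⟨⟨phiFun α, phiMH α⟩, phiFix α⟩,
        psiMH ⟨⟨phiFun α, phiMH α⟩, phiFix α⟩⟩ : HomPoset (twProd T H actT actH) G) = α := by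
    intro α
    apply Subtype.ext
    funext X
    induction X using Quot.ind with
    | _ a =>
      show psiVal ⟨⟨phiFun α, phiMH α⟩, phiFix α⟩ a = α.1 (Quot.mk R a)
      ext x
      constructor
      · rintro ⟨f, hf, rfl⟩
        exact hf a.1
      · intro hx
        refine ⟨fun s => if hs : s = a.1 then x else (α.2.1 (Quot.mk R (s, a.2))).some,
          ?_, by simp⟩
        intro t
        by_cases ht : t = a.1
        · subst ht; simpa using hx
        · simp only [ht, dif_neg, not_false_iff]
          exact (α.2.1 (Quot.mk R (t, a.2))).some_mem
  -- assemble order homs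
  refine ⟨⟨fun α => ⟨⟨phiFun α, phiMH α⟩, phiFix α⟩, ?_⟩,
    ⟨fun β => ⟨psiFun β, psiMH β⟩, ?_⟩, ?_, ?_, ?_⟩
  · intro α α' hle h f hf t
    exact hle _ (hf t)
  · intro β β' hle X
    induction X using Quot.ind with
    | _ a =>
      show psiVal β a ⊆ psiVal β' a
      rintro x ⟨f, hf, rfl⟩
      exact ⟨f, hle _ hf, rfl⟩
  · -- ψ ∘ φ = id
    intro α
    exact hret α
  · -- β ≤ φ (ψ β)
    intro β h f hf t
    show f t ∈ psiVal β (t, h)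
    exact ⟨f, hf, rfl⟩
  · -- injectivity
    intro α α' hαα'
    have h1 := congrArg (fun δ => (⟨psiFun δ, psiMH δ⟩ : HomPoset (twProd T H actT actH) G)) hαα'
    exact (hret α).symm.trans (h1.trans (hret α'))
end

section
/- Let Γ be a group acting on the left on a finite graph G by graph automorphisms and on a finite poset P by order automorphisms. Let Γ act on Hom(P^1, G) by (γ·α)(x) = γ·α(γ^{-1}·x) with Hom_Γ(P^1,G) the fixed subposet, and let Γ act correspondingly on Poset(P, Hom(1,G)) with Poset_Γ(P, Hom(1,G)) the fixed subposet. Then the maps φ : Hom_Γ(P^1, G) → Poset_Γ(P, Hom(1,G)), defined by φ(α)(x) = the union of α(y) over all atoms y ≤ x, and ψ : Poset_Γ(P, Hom(1,G)) → Hom_Γ(P^1, G), defined by ψ(f)(x) = f(x), are well-defined order-preserving maps satisfying ψ∘φ = id and φ(ψ(f)) ≤ f for all f; in particular Hom_Γ(P^1, G) embeds as a strong deformation retract of Poset_Γ(P, Hom(1,G)). -/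
/-- The atoms (minimal elements) of a poset. -/
def MinVert (P : Type) [PartialOrder P] : Type := {x : P // ∀ y, y ≤ x → y = x}

/-- The reflexive graph `P^1` on the atoms of `P`: `x ~ y` iff they have a common
upper bound. -/
def oneSkel (P : Type) [PartialOrder P] : LGraph (MinVert P) where
  Adj a b := ∃ z, a.1 ≤ z ∧ b.1 ≤ z
  symm a b h := by obtain ⟨z, h1, h2⟩ := h; exact ⟨z, h2, h1⟩

/-- The poset `Hom(1,G)` of cliques of looped vertices of `G`. -/
def CliquePoset {VG : Type} (G : LGraph VG) : Type :=
  {A : Set VG // A.Nonempty ∧ ∀ x ∈ A, ∀ y ∈ A, G.Adj x y}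

instance {VG : Type} (G : LGraph VG) : PartialOrder (CliquePoset G) :=
  Subtype.partialOrder _

section Actions

variable {Γ P VG : Type} [Group Γ] [PartialOrder P] [MulAction Γ P] [MulAction Γ VG]

/-- The induced action of `γ` on the atoms of `P`. -/
def minAct (hPmono : ∀ γ : Γ, Monotone (fun p : P => γ • p)) (γ : Γ)
    (x : MinVert P) : MinVert P :=
  ⟨γ • x.1, fun q hq => by
    have h1 : γ⁻¹ • q ≤ x.1 := by
      have := hPmono γ⁻¹ hq
      simpa using this
    have h2 := x.2 _ h1
    have h3 : γ • (γ⁻¹ • q) = γ • x.1 := by rw [h2]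
    simpa using h3⟩

/-- The action of `γ` on `Hom(P^1, G)`, `(γ·α)(x) = γ·α(γ⁻¹·x)`. -/
def homActSkel (G : LGraph VG)
    (hGadj : ∀ (γ : Γ) v w, G.Adj v w → G.Adj (γ • v) (γ • w))
    (hPmono : ∀ γ : Γ, Monotone (fun p : P => γ • p))
    (γ : Γ) (α : HomPoset (oneSkel P) G) : HomPoset (oneSkel P) G :=
  ⟨fun x => (γ • ·) '' α.1 (minAct hPmono γ⁻¹ x),
   ⟨fun x => (α.2.1 _).image _,
    fun x y hxy u hu v hv => by
      obtain ⟨a, ha, rfl⟩ := hu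
      obtain ⟨b, hb, rfl⟩ := hv
      obtain ⟨z, hz1, hz2⟩ := hxy
      exact hGadj γ _ _ (α.2.2 _ _ ⟨γ⁻¹ • z, hPmono γ⁻¹ hz1, hPmono γ⁻¹ hz2⟩ a ha b hb)⟩⟩

/-- The action of `γ` on `Hom(1,G)` (cliques), by taking images. -/
def cliqueAct (G : LGraph VG)
    (hGadj : ∀ (γ : Γ) v w, G.Adj v w → G.Adj (γ • v) (γ • w))
    (γ : Γ) (A : CliquePoset G) : CliquePoset G :=
  ⟨(γ • ·) '' A.1, A.2.1.image _, fun x hx y hy => by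
    obtain ⟨a, ha, rfl⟩ := hx
    obtain ⟨b, hb, rfl⟩ := hy
    exact hGadj γ _ _ (A.2.2 a ha b hb)⟩

end Actions

section MyAux

variable {Γ P VG : Type} [Group Γ] [PartialOrder P] [Fintype P]
    [MulAction Γ P] [MulAction Γ VG]

lemma my_exists_min_le (x : P) : ∃ y : MinVert P, y.1 ≤ x := by
  obtain ⟨y, hy⟩ := Set.Finite.exists_minimal (s := {y : P | y ≤ x})
    (Set.toFinite _) ⟨x, le_refl x⟩
  exact ⟨⟨y, fun q hq => le_antisymm hq (hy.2 (le_trans hq hy.1) hq)⟩, hy.1⟩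

variable (G : LGraph VG)

def phiSet (α : HomPoset (oneSkel P) G) (x : P) : Set VG :=
  {v | ∃ y : MinVert P, y.1 ≤ x ∧ v ∈ α.1 y}

lemma phiSet_clique (α : HomPoset (oneSkel P) G) (x : P) :
    (phiSet G α x).Nonempty ∧ ∀ v ∈ phiSet G α x, ∀ w ∈ phiSet G α x, G.Adj v w := by
  constructor
  · obtain ⟨y, hy⟩ := my_exists_min_le (P := P) x
    obtain ⟨v, hv⟩ := α.2.1 y
    exact ⟨v, y, hy, hv⟩
  · rintro v ⟨y1, hy1, hv⟩ w ⟨y2, hy2, hw⟩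
    exact α.2.2 y1 y2 ⟨x, hy1, hy2⟩ v hv w hw

def phi0 (α : HomPoset (oneSkel P) G) : P →o CliquePoset G :=
  ⟨fun x => ⟨phiSet G α x, phiSet_clique G α x⟩,
   fun x y hxy => by
     show phiSet G α x ⊆ phiSet G α y
     rintro v ⟨z, hz, hv⟩; exact ⟨z, le_trans hz hxy, hv⟩⟩

def psi0 (f : P →o CliquePoset G) : HomPoset (oneSkel P) G :=
  ⟨fun y => (f y.1).1,
   ⟨fun y => (f y.1).2.1,
    fun y1 y2 h v hv w hw => by
      obtain ⟨z, hz1, hz2⟩ := h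
      exact (f z).2.2 v ((f.mono hz1 : (f y1.1).1 ⊆ (f z).1) hv)
        w ((f.mono hz2 : (f y2.1).1 ⊆ (f z).1) hw)⟩⟩

lemma minAct_inv (hPmono : ∀ γ : Γ, Monotone (fun p : P => γ • p)) (γ : Γ) (y : MinVert P) :
    minAct hPmono γ⁻¹ (minAct hPmono γ y) = y :=
  Subtype.ext (by simp [minAct])

variable (hGadj : ∀ (γ : Γ) v w, G.Adj v w → G.Adj (γ • v) (γ • w))
variable (hPmono : ∀ γ : Γ, Monotone (fun p : P => γ • p))

lemma phiSet_equivariant (γ : Γ) (α : HomPoset (oneSkel P) G)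
    (hα : homActSkel G hGadj hPmono γ α = α) (x : P) :
    phiSet G α (γ • x) = (γ • ·) '' phiSet G α x := by
  have hval : ∀ y, α.1 y = (γ • ·) '' α.1 (minAct hPmono γ⁻¹ y) := fun y =>
    (congrFun (congrArg Subtype.val hα) y).symm
  ext v
  constructor
  · rintro ⟨y, hyx, hv⟩
    rw [hval y] at hv
    obtain ⟨w, hw, rfl⟩ := hv
    refine ⟨w, ⟨minAct hPmono γ⁻¹ y, ?_, hw⟩, rfl⟩
    have := hPmono γ⁻¹ hyx
    simpa [minAct] using this
  · rintro ⟨w, ⟨y', hy'x, hw⟩, rfl⟩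
    refine ⟨minAct hPmono γ y', hPmono γ hy'x, ?_⟩
    rw [hval (minAct hPmono γ y'), minAct_inv]
    exact ⟨w, hw, rfl⟩

lemma psi0_equivariant (γ : Γ) (f : P →o CliquePoset G)
    (hf : ∀ (γ : Γ) (x : P), f (γ • x) = cliqueAct G hGadj γ (f x)) :
    homActSkel G hGadj hPmono γ (psi0 G f) = psi0 G f := by
  apply Subtype.ext
  funext y
  show (γ • ·) '' (f ((minAct hPmono γ⁻¹ y).1)).1 = (f y.1).1
  have h1 := congrArg Subtype.val (hf γ (γ⁻¹ • y.1))
  have h2 : γ • γ⁻¹ • y.1 = y.1 := smul_inv_smul γ y.1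
  rw [h2] at h1
  exact h1.symm

end MyAux

/-- the maps `φ(α)(x) = ⋃ {α(y) : y an atom, y ≤ x}` and
`ψ(f)(x) = f(x)` are well-defined order-preserving maps between the fixed-point
poset `Hom_Γ(P^1, G)` and `Poset_Γ(P, Hom(1,G))`, satisfying `ψ ∘ φ = id` and
`φ(ψ(f)) ≤ f`; in particular `Hom_Γ(P^1,G)` embeds as a strong deformation
retract of `Poset_Γ(P, Hom(1,G))`. -/
theorem stmt_3 {Γ P VG : Type} [Group Γ] [PartialOrder P] [Fintype P] [Fintype VG]
    [MulAction Γ P] [MulAction Γ VG] (G : LGraph VG)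
    (hGadj : ∀ (γ : Γ) v w, G.Adj v w → G.Adj (γ • v) (γ • w))
    (hPmono : ∀ γ : Γ, Monotone (fun p : P => γ • p)) :
    ∃ (φ : {α : HomPoset (oneSkel P) G // ∀ γ : Γ, homActSkel G hGadj hPmono γ α = α} →o
          {f : P →o CliquePoset G // ∀ (γ : Γ) (x : P), f (γ • x) = cliqueAct G hGadj γ (f x)})
      (ψ : {f : P →o CliquePoset G // ∀ (γ : Γ) (x : P), f (γ • x) = cliqueAct G hGadj γ (f x)} →o
          {α : HomPoset (oneSkel P) G // ∀ γ : Γ, homActSkel G hGadj hPmono γ α = α}),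
      (∀ α (x : P), ((φ α).1 x).1 = {v | ∃ y : MinVert P, y.1 ≤ x ∧ v ∈ α.1.1 y}) ∧
      (∀ f (y : MinVert P), (ψ f).1.1 y = (f.1 y.1).1) ∧
      (∀ α, ψ (φ α) = α) ∧
      (∀ f, φ (ψ f) ≤ f) := by
  refine ⟨⟨fun α => ⟨phi0 G α.1, fun γ x => ?_⟩, fun α β hab x => ?_⟩,
    ⟨fun f => ⟨psi0 G f.1, fun γ => psi0_equivariant G hGadj hPmono γ f.1 f.2⟩,
      fun f g hfg y => ?_⟩, fun α x => rfl, fun f y => rfl, ?_, ?_⟩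
  · -- φ equivariance
    apply Subtype.ext
    exact phiSet_equivariant G hGadj hPmono γ α.1 (α.2 γ) x
  · -- φ monotone
    show phiSet G α.1 x ⊆ phiSet G β.1 x
    rintro v ⟨y, hy, hv⟩
    exact ⟨y, hy, hab y hv⟩
  · -- ψ monotone
    exact hfg y.1
  · -- ψ ∘ φ = id
    intro α
    apply Subtype.ext
    apply Subtype.ext
    funext y
    show phiSet G α.1 y.1 = α.1.1 y
    ext v
    constructor
    · rintro ⟨y', hy', hv⟩
      have : y' = y := Subtype.ext (y.2 _ hy')
      rwa [this] at hv
    · intro hv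
      exact ⟨y, le_refl _, hv⟩
  · -- φ ∘ ψ ≤ id
    intro f x
    show phiSet G (psi0 G f.1) x ⊆ (f.1 x).1
    rintro v ⟨y, hy, hv⟩
    exact (f.1.mono hy : (f.1 y.1).1 ⊆ (f.1 x).1) hv
end

section
/- Let P be a finite poset on which a group Γ acts freely and strongly regularly by order automorphisms. Then: (i) the relation on the orbit set P/Γ given by [p] ≤ [q] iff γ·p ≤ q for some γ ∈ Γ is a partial order; (ii) the quotient map π : P → P/Γ is strictly order-preserving (p < q implies π(p) < π(q)), hence injective on every chain of P; and (iii) for every chain c' of P/Γ, the set of chains of P that π maps bijectively onto c' is nonempty and forms exactly one orbit under the elementwise Γ-action on chains. -/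
set_option linter.unusedSectionVars false

section Helpers

variable {Γ P : Type} [Group Γ] [PartialOrder P] [Fintype P] [MulAction Γ P]

theorem helper_mk_eq {p q : P} :
    Quot.mk (fun p q : P => ∃ γ : Γ, q = γ • p) p =
      Quot.mk (fun p q : P => ∃ γ : Γ, q = γ • p) q ↔ ∃ γ : Γ, q = γ • p := by
  constructor
  · intro h
    have hq : Equivalence (fun p q : P => ∃ γ : Γ, q = γ • p) := by
      refine ⟨fun x => ⟨1, (one_smul Γ x).symm⟩, ?_, ?_⟩
      · rintro x y ⟨γ, rfl⟩; exact ⟨γ⁻¹, by simp⟩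
      · rintro x y z ⟨γ, rfl⟩ ⟨δ, rfl⟩; exact ⟨δ * γ, by simp [mul_smul]⟩
    exact hq.eqvGen_iff.mp (Quot.eq.mp h)
  · rintro ⟨γ, h⟩; exact Quot.sound ⟨γ, h⟩

theorem helper_fix (hmono : ∀ γ : Γ, Monotone (fun p : P => γ • p))
    {γ : Γ} {p : P} (h : γ • p ≤ p) : γ • p = p := by
  obtain ⟨m, n, hmn, he⟩ : ∃ m n : ℕ, m < n ∧ γ ^ m • p = γ ^ n • p := by
    obtain ⟨m, n, hne, he⟩ := Finite.exists_ne_map_eq_of_infinite (fun k : ℕ => γ ^ k • p)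
    rcases hne.lt_or_gt with h' | h'
    exacts [⟨m, n, h', he⟩, ⟨n, m, h', he.symm⟩]
  have hd : γ ^ (n - m) • p = p := by
    have h2 : γ ^ m • (γ ^ (n - m) • p) = γ ^ m • p := by
      rw [smul_smul, ← pow_add, Nat.add_sub_cancel' hmn.le]
      exact he.symm
    exact smul_left_cancel _ h2
  have hdesc : ∀ k : ℕ, γ ^ (k + 1) • p ≤ γ • p := by
    intro k; induction k with
    | zero => simp
    | succ k ih =>
      calc γ ^ (k + 1 + 1) • p = γ ^ (k + 1) • (γ • p) := by rw [smul_smul, ← pow_succ]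
        _ ≤ γ ^ (k + 1) • p := hmono _ h
        _ ≤ γ • p := ih
  have hpos : 1 ≤ n - m := by omega
  have hle : p ≤ γ • p := by
    have h3 := hdesc (n - m - 1)
    rwa [Nat.sub_add_cancel hpos, hd] at h3
  exact le_antisymm h hle

theorem helper_key (hmono : ∀ γ : Γ, Monotone (fun p : P => γ • p))
    (hreg : ∀ (u v m : P) (γ : Γ), u ≤ m → v ≤ m → γ • u = v → γ = 1)
    {a b : P} {γ δ : Γ}
    (h1 : a ≤ b ∨ b ≤ a) (h2 : γ • a ≤ δ • b ∨ δ • b ≤ γ • a) : γ = δ := by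
  rcases h2 with h2 | h2
  · have h3 : (δ⁻¹ * γ) • a ≤ b := by
      have := hmono δ⁻¹ h2
      simpa [mul_smul] using this
    rcases h1 with h1 | h1
    · have := hreg a ((δ⁻¹ * γ) • a) b (δ⁻¹ * γ) h1 h3 rfl
      have h4 : γ = δ * 1 := by rw [← this]; group
      simpa using h4
    · have := hreg a ((δ⁻¹ * γ) • a) a (δ⁻¹ * γ) le_rfl (h3.trans h1) rfl
      have h4 : γ = δ * 1 := by rw [← this]; group
      simpa using h4
  · have h3 : (γ⁻¹ * δ) • b ≤ a := by
      have := hmono γ⁻¹ h2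
      simpa [mul_smul] using this
    rcases h1 with h1 | h1
    · have := hreg b ((γ⁻¹ * δ) • b) b (γ⁻¹ * δ) le_rfl (h3.trans h1) rfl
      have h4 : δ = γ * 1 := by rw [← this]; group
      simp at h4; exact h4.symm
    · have := hreg b ((γ⁻¹ * δ) • b) a (γ⁻¹ * δ) h1 h3 rfl
      have h4 : δ = γ * 1 := by rw [← this]; group
      simp at h4; exact h4.symm

theorem helper_eq_of_le
    (hreg : ∀ (u v m : P) (γ : Γ), u ≤ m → v ≤ m → γ • u = v → γ = 1)
    {p q : P} (hle : p ≤ q)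
    (h : Quot.mk (fun p q : P => ∃ γ : Γ, q = γ • p) p =
      Quot.mk (fun p q : P => ∃ γ : Γ, q = γ • p) q) : p = q := by
  obtain ⟨γ, rfl⟩ := helper_mk_eq.mp h
  have : γ = 1 := hreg p (γ • p) (γ • p) γ hle le_rfl rfl
  simp [this]

theorem helper_injOn
    (hreg : ∀ (u v m : P) (γ : Γ), u ≤ m → v ≤ m → γ • u = v → γ = 1)
    {c : Set P} (hc : IsChain (· ≤ ·) c) :
    Set.InjOn (Quot.mk (fun p q : P => ∃ γ : Γ, q = γ • p)) c := by
  intro p hp q hq h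
  by_contra hne
  rcases hc hp hq hne with h' | h'
  · exact hne (helper_eq_of_le hreg h' h)
  · exact hne ((helper_eq_of_le hreg h' h.symm).symm)

theorem helper_chain_top {α : Type} {rel : α → α → Prop} (hrefl : ∀ x, rel x x)
    (htrans : ∀ {x y z : α}, rel x y → rel y z → rel x z)
    {s : Set α} (hfin : s.Finite) (hne : s.Nonempty) (hch : IsChain rel s) :
    ∃ M ∈ s, ∀ X ∈ s, rel X M := by
  have main : ∀ (n : ℕ) (s : Set α), s.Finite → s.ncard ≤ n → s.Nonempty → IsChain rel s →
      ∃ M ∈ s, ∀ X ∈ s, rel X M := by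
    intro n
    induction n with
    | zero =>
      intro s hfin hcard hne _
      have := (Set.ncard_pos hfin).mpr hne
      omega
    | succ n ih =>
      intro s hfin hcard hne hch
      obtain ⟨a, ha⟩ := hne
      by_cases h' : (s \ {a}).Nonempty
      · have hcard' : (s \ {a}).ncard ≤ n := by
          have := Set.ncard_diff_singleton_lt_of_mem ha hfin
          omega
        obtain ⟨M, hM, hMtop⟩ := ih _ (hfin.diff : (s \ {a}).Finite) hcard' h' (hch.mono Set.diff_subset)
        have haM : a ≠ M := fun h => hM.2 (by simp [h])
        rcases hch ha hM.1 haM with h1 | h1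
        · refine ⟨M, hM.1, fun X hX => ?_⟩
          by_cases hXa : X = a
          · subst hXa; exact h1
          · exact hMtop X ⟨hX, hXa⟩
        · refine ⟨a, ha, fun X hX => ?_⟩
          by_cases hXa : X = a
          · subst hXa; exact hrefl _
          · exact htrans (hMtop X ⟨hX, hXa⟩) h1
      · refine ⟨a, ha, fun X hX => ?_⟩
        have hXa : X = a := by
          by_contra h
          exact h' ⟨X, hX, h⟩
        subst hXa; exact hrefl X
  exact main s.ncard s hfin le_rfl hne hch

end Helpers
section Helpers2

variable {Γ P : Type} [Group Γ] [PartialOrder P] [Fintype P] [MulAction Γ P]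

theorem helper_transfer (hmono : ∀ γ : Γ, Monotone (fun p : P => γ • p)) {p p' q q' : P}
    (hp : Quot.mk (fun p q : P => ∃ γ : Γ, q = γ • p) p =
      Quot.mk (fun p q : P => ∃ γ : Γ, q = γ • p) p')
    (hq : Quot.mk (fun p q : P => ∃ γ : Γ, q = γ • p) q =
      Quot.mk (fun p q : P => ∃ γ : Γ, q = γ • p) q')
    (h : ∃ γ : Γ, γ • p ≤ q) : ∃ γ : Γ, γ • p' ≤ q' := by
  obtain ⟨α, rfl⟩ := helper_mk_eq.mp hp
  obtain ⟨β, rfl⟩ := helper_mk_eq.mp hq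
  obtain ⟨γ, hγ⟩ := h
  refine ⟨β * γ * α⁻¹, ?_⟩
  have := hmono β hγ
  simpa [mul_smul] using this

theorem helper_qle_iff (hmono : ∀ γ : Γ, Monotone (fun p : P => γ • p))
    (qle : Quot (fun p q : P => ∃ γ : Γ, q = γ • p) →
           Quot (fun p q : P => ∃ γ : Γ, q = γ • p) → Prop)
    (hqle : ∀ X Y, qle X Y ↔ ∃ p q, Quot.mk (fun p q : P => ∃ γ : Γ, q = γ • p) p = X ∧
      Quot.mk (fun p q : P => ∃ γ : Γ, q = γ • p) q = Y ∧ ∃ γ : Γ, γ • p ≤ q)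
    (p q : P) :
    qle (Quot.mk (fun p q : P => ∃ γ : Γ, q = γ • p) p)
      (Quot.mk (fun p q : P => ∃ γ : Γ, q = γ • p) q) ↔ ∃ γ : Γ, γ • p ≤ q := by
  rw [hqle]
  constructor
  · rintro ⟨p', q', hp, hq, h⟩; exact helper_transfer hmono hp hq h
  · intro h; exact ⟨p, q, rfl, rfl, h⟩

theorem helper_qle_refl
    (qle : Quot (fun p q : P => ∃ γ : Γ, q = γ • p) →
           Quot (fun p q : P => ∃ γ : Γ, q = γ • p) → Prop)
    (hqle : ∀ X Y, qle X Y ↔ ∃ p q, Quot.mk (fun p q : P => ∃ γ : Γ, q = γ • p) p = X ∧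
      Quot.mk (fun p q : P => ∃ γ : Γ, q = γ • p) q = Y ∧ ∃ γ : Γ, γ • p ≤ q) :
    ∀ X, qle X X := by
  intro X
  obtain ⟨p, rfl⟩ := Quot.exists_rep X
  exact (hqle _ _).mpr ⟨p, p, rfl, rfl, 1, by simp⟩

theorem helper_qle_trans (hmono : ∀ γ : Γ, Monotone (fun p : P => γ • p))
    (qle : Quot (fun p q : P => ∃ γ : Γ, q = γ • p) →
           Quot (fun p q : P => ∃ γ : Γ, q = γ • p) → Prop)
    (hqle : ∀ X Y, qle X Y ↔ ∃ p q, Quot.mk (fun p q : P => ∃ γ : Γ, q = γ • p) p = X ∧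
      Quot.mk (fun p q : P => ∃ γ : Γ, q = γ • p) q = Y ∧ ∃ γ : Γ, γ • p ≤ q) :
    ∀ X Y Z, qle X Y → qle Y Z → qle X Z := by
  intro X Y Z h1 h2
  obtain ⟨p, rfl⟩ := Quot.exists_rep X
  obtain ⟨q, rfl⟩ := Quot.exists_rep Y
  obtain ⟨r, rfl⟩ := Quot.exists_rep Z
  obtain ⟨γ, hγ⟩ := (helper_qle_iff hmono qle hqle p q).mp h1
  obtain ⟨δ, hδ⟩ := (helper_qle_iff hmono qle hqle q r).mp h2
  refine (helper_qle_iff hmono qle hqle p r).mpr ⟨δ * γ, ?_⟩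
  rw [mul_smul]
  exact le_trans (hmono δ hγ) hδ

theorem helper_qle_antisymm (hmono : ∀ γ : Γ, Monotone (fun p : P => γ • p))
    (hfree : ∀ (γ : Γ) (p : P), γ • p = p → γ = 1)
    (qle : Quot (fun p q : P => ∃ γ : Γ, q = γ • p) →
           Quot (fun p q : P => ∃ γ : Γ, q = γ • p) → Prop)
    (hqle : ∀ X Y, qle X Y ↔ ∃ p q, Quot.mk (fun p q : P => ∃ γ : Γ, q = γ • p) p = X ∧
      Quot.mk (fun p q : P => ∃ γ : Γ, q = γ • p) q = Y ∧ ∃ γ : Γ, γ • p ≤ q) :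
    ∀ X Y, qle X Y → qle Y X → X = Y := by
  intro X Y h1 h2
  obtain ⟨p, rfl⟩ := Quot.exists_rep X
  obtain ⟨q, rfl⟩ := Quot.exists_rep Y
  obtain ⟨γ, hγ⟩ := (helper_qle_iff hmono qle hqle p q).mp h1
  obtain ⟨δ, hδ⟩ := (helper_qle_iff hmono qle hqle q p).mp h2
  have hfix : (δ * γ) • p = p := by
    apply helper_fix hmono
    rw [mul_smul]
    exact le_trans (hmono δ hγ) hδ
  have h1' : δ * γ = 1 := hfree _ _ hfix
  have hγδ : γ * δ = 1 := by
    have : δ = γ⁻¹ := by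
      have := congrArg (· * γ⁻¹) h1'; simpa [mul_assoc] using this
    simp [this]
  have hq : q ≤ γ • p := by
    have h5 : γ • (δ • q) ≤ γ • p := hmono γ hδ
    rw [smul_smul, hγδ, one_smul] at h5
    exact h5
  have : q = γ • p := le_antisymm hq hγ
  exact Quot.sound ⟨γ, this⟩

theorem helper_exists_lift (hmono : ∀ γ : Γ, Monotone (fun p : P => γ • p))
    (hreg : ∀ (u v m : P) (γ : Γ), u ≤ m → v ≤ m → γ • u = v → γ = 1)
    (qle : Quot (fun p q : P => ∃ γ : Γ, q = γ • p) →
           Quot (fun p q : P => ∃ γ : Γ, q = γ • p) → Prop)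
    (hqle : ∀ X Y, qle X Y ↔ ∃ p q, Quot.mk (fun p q : P => ∃ γ : Γ, q = γ • p) p = X ∧
      Quot.mk (fun p q : P => ∃ γ : Γ, q = γ • p) q = Y ∧ ∃ γ : Γ, γ • p ≤ q) :
    ∀ (n : ℕ) (c' : Set (Quot (fun p q : P => ∃ γ : Γ, q = γ • p))),
      c'.ncard ≤ n → c'.Nonempty → IsChain qle c' →
      ∃ c : Set P, c.Nonempty ∧ IsChain (· ≤ ·) c ∧
        Set.BijOn (Quot.mk (fun p q : P => ∃ γ : Γ, q = γ • p)) c c' := by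
  have hQfin : Finite (Quot (fun p q : P => ∃ γ : Γ, q = γ • p)) :=
    Finite.of_surjective _ (fun X => Quot.exists_rep X)
  intro n
  induction n with
  | zero =>
    intro c' hcard hne _
    have := (Set.ncard_pos (Set.toFinite c')).mpr hne
    omega
  | succ n ih =>
    intro c' hcard hne hch
    obtain ⟨M, hM, hMtop⟩ := helper_chain_top (helper_qle_refl qle hqle)
      (fun h1 h2 => helper_qle_trans hmono qle hqle _ _ _ h1 h2)
      (Set.toFinite c') hne hch
    by_cases hrest : (c' \ {M}).Nonempty
    · have hcard' : (c' \ {M}).ncard ≤ n := by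
        have := Set.ncard_diff_singleton_lt_of_mem hM (Set.toFinite c')
        omega
      obtain ⟨c, hcne, hcch, hcbij⟩ := ih _ hcard' hrest (hch.mono Set.diff_subset)
      obtain ⟨m, hm, hmtop⟩ := helper_chain_top (fun x => le_refl x)
        (fun h1 h2 => le_trans h1 h2) (Set.toFinite c) hcne hcch
      have hmM : qle (Quot.mk (fun p q : P => ∃ γ : Γ, q = γ • p) m) M :=
        hMtop _ (hcbij.mapsTo hm).1
      obtain ⟨pM, hpM⟩ := Quot.exists_rep M
      obtain ⟨γ, hγ⟩ : ∃ γ : Γ, γ • m ≤ pM := by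
        rw [← hpM] at hmM
        exact (helper_qle_iff hmono qle hqle m pM).mp hmM
      set t := γ⁻¹ • pM with ht
      have hmt : m ≤ t := by
        have := hmono γ⁻¹ hγ
        simpa [ht] using this
      have hmkt : Quot.mk (fun p q : P => ∃ γ : Γ, q = γ • p) t = M := by
        rw [← hpM]
        exact (Quot.sound ⟨γ⁻¹, rfl⟩).symm
      have hchain : IsChain (· ≤ ·) (insert t c) :=
        hcch.insert (fun b hb _ => Or.inr (le_trans (hmtop b hb) hmt))
      refine ⟨insert t c, Set.insert_nonempty _ _, hchain, ?_, helper_injOn hreg hchain, ?_⟩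
      · rintro x hx
        rcases Set.mem_insert_iff.mp hx with rfl | hx'
        · rw [hmkt]; exact hM
        · exact ((hcbij.mapsTo hx').1)
      · intro X hX
        by_cases hXM : X = M
        · exact ⟨t, Set.mem_insert _ _, by rw [hmkt, hXM]⟩
        · obtain ⟨p, hp, hpeq⟩ := hcbij.surjOn ⟨hX, hXM⟩
          exact ⟨p, Set.mem_insert_of_mem _ hp, hpeq⟩
    · obtain ⟨p, hp⟩ := Quot.exists_rep M
      have hc' : c' = {M} := by
        apply Set.eq_singleton_iff_unique_mem.mpr
        refine ⟨hM, fun x hx => ?_⟩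
        by_contra h
        exact hrest ⟨x, hx, h⟩
      have hch1 : IsChain (· ≤ ·) ({p} : Set P) := by
        intro x hx y hy hne
        rw [Set.mem_singleton_iff] at hx hy
        exact absurd (hx.trans hy.symm) hne
      refine ⟨{p}, Set.singleton_nonempty p, hch1, ?_⟩
      rw [hc']
      exact Set.bijOn_singleton.mpr hp

end Helpers2

/-- quotient of a finite poset by a free, strongly regular action.
(i) the induced relation on orbits is a partial order; (ii) the quotient map is
strictly order-preserving, hence injective on chains; (iii) the chains of `P`
mapped bijectively onto a given chain of `P/Γ` form exactly one nonempty orbit. -/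
theorem stmt_4 {Γ P : Type} [Group Γ] [PartialOrder P] [Fintype P] [MulAction Γ P]
    (hmono : ∀ γ : Γ, Monotone (fun p : P => γ • p))
    (hfree : ∀ (γ : Γ) (p : P), γ • p = p → γ = 1)
    (hreg : ∀ (u v m : P) (γ : Γ), u ≤ m → v ≤ m → γ • u = v → γ = 1) :
    -- the quotient and the induced relation
    ∀ (π : P → Quot (fun p q : P => ∃ γ : Γ, q = γ • p))
      (qle : Quot (fun p q : P => ∃ γ : Γ, q = γ • p) →
             Quot (fun p q : P => ∃ γ : Γ, q = γ • p) → Prop),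
      π = Quot.mk _ →
      (∀ X Y, qle X Y ↔ ∃ p q, π p = X ∧ π q = Y ∧ ∃ γ : Γ, γ • p ≤ q) →
      -- (i) partial order
      ((∀ X, qle X X) ∧
       (∀ X Y Z, qle X Y → qle Y Z → qle X Z) ∧
       (∀ X Y, qle X Y → qle Y X → X = Y)) ∧
      -- (ii) strictly order-preserving, injective on chains
      (∀ p q : P, p < q → qle (π p) (π q) ∧ π p ≠ π q) ∧
      (∀ c : Set P, IsChain (· ≤ ·) c → Set.InjOn π c) ∧
      -- (iii) the chains lifting a chain of the quotient form one nonempty orbit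
      (∀ c' : Set (Quot (fun p q : P => ∃ γ : Γ, q = γ • p)),
        c'.Nonempty → IsChain qle c' →
        (∃ c : Set P, c.Nonempty ∧ IsChain (· ≤ ·) c ∧ Set.BijOn π c c') ∧
        (∀ c₁ c₂ : Set P,
          (c₁.Nonempty ∧ IsChain (· ≤ ·) c₁ ∧ Set.BijOn π c₁ c') →
          (c₂.Nonempty ∧ IsChain (· ≤ ·) c₂ ∧ Set.BijOn π c₂ c') →
          ∃ γ : Γ, c₂ = (fun p => γ • p) '' c₁) ∧
        (∀ (c : Set P) (γ : Γ),
          (c.Nonempty ∧ IsChain (· ≤ ·) c ∧ Set.BijOn π c c') →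
          ((fun p => γ • p) '' c).Nonempty ∧ IsChain (· ≤ ·) ((fun p => γ • p) '' c) ∧
            Set.BijOn π ((fun p => γ • p) '' c) c')) := by
  intro π qle hπ hqle
  subst hπ
  refine ⟨⟨helper_qle_refl qle hqle, helper_qle_trans hmono qle hqle,
      helper_qle_antisymm hmono hfree qle hqle⟩, ?_, ?_, ?_⟩
  · -- (ii) strict
    intro p q hpq
    constructor
    · exact (helper_qle_iff hmono qle hqle p q).mpr ⟨1, by simpa using hpq.le⟩
    · intro h
      exact hpq.ne (helper_eq_of_le hreg hpq.le h)
  · -- injective on chains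
    intro c hc
    exact helper_injOn hreg hc
  · -- (iii)
    intro c' hne hch
    refine ⟨helper_exists_lift hmono hreg qle hqle c'.ncard c' le_rfl hne hch, ?_, ?_⟩
    · -- uniqueness of orbit
      rintro c₁ c₂ ⟨hne₁, hch₁, hbij₁⟩ ⟨hne₂, hch₂, hbij₂⟩
      obtain ⟨x₀, hx₀⟩ := hne
      obtain ⟨p₀, hp₀c, hp₀⟩ := hbij₁.surjOn hx₀
      obtain ⟨q₀, hq₀c, hq₀⟩ := hbij₂.surjOn hx₀
      obtain ⟨γ, hγ⟩ := helper_mk_eq.mp (hp₀.trans hq₀.symm)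
      have key2 : ∀ p ∈ c₁, ∀ q ∈ c₂,
          Quot.mk (fun p q : P => ∃ γ : Γ, q = γ • p) q =
            Quot.mk (fun p q : P => ∃ γ : Γ, q = γ • p) p → q = γ • p := by
        intro p hp q hq hmk
        obtain ⟨δ, hδ⟩ := helper_mk_eq.mp hmk.symm
        by_cases hpp : p = p₀
        · subst hpp
          have hqq : q = q₀ := hbij₂.injOn hq hq₀c (hmk.trans (hp₀.trans hq₀.symm))
          rw [hqq, hγ]
        · have hqq : q ≠ q₀ := by
            intro h
            apply hpp
            apply hbij₁.injOn hp hp₀c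
            rw [← hmk, h, hq₀, ← hp₀]
          have h1 : p₀ ≤ p ∨ p ≤ p₀ := by
            rcases hch₁ hp₀c hp (fun h => hpp h.symm) with h | h
            exacts [Or.inl h, Or.inr h]
          have h2 : γ • p₀ ≤ δ • p ∨ δ • p ≤ γ • p₀ := by
            rw [← hγ, ← hδ]
            rcases hch₂ hq₀c hq (fun h => hqq h.symm) with h | h
            exacts [Or.inl h, Or.inr h]
          rw [hδ, helper_key hmono hreg h1 h2]
      refine ⟨γ, ?_⟩
      ext x
      constructor
      · intro hx
        obtain ⟨p, hp, hmkp⟩ := hbij₁.surjOn (hbij₂.mapsTo hx)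
        exact ⟨p, hp, (key2 p hp x hx hmkp.symm).symm⟩
      · rintro ⟨p, hp, rfl⟩
        obtain ⟨q, hq, hmkq⟩ := hbij₂.surjOn (hbij₁.mapsTo hp)
        have h6 := key2 p hp q hq hmkq
        show γ • p ∈ c₂
        rw [← h6]
        exact hq
    · -- orbit stability
      rintro c γ ⟨hcne, hcch, hcbij⟩
      have hchimg : IsChain (· ≤ ·) ((fun p => γ • p) '' c) :=
        hcch.image_of_map_rel _ _ _ (fun x y h => hmono γ h)
      refine ⟨hcne.image _, hchimg, ?_, helper_injOn hreg hchimg, ?_⟩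
      · rintro x ⟨p, hp, rfl⟩
        have h : Quot.mk (fun p q : P => ∃ γ : Γ, q = γ • p) ((fun p => γ • p) p) =
            Quot.mk (fun p q : P => ∃ γ : Γ, q = γ • p) p := (Quot.sound ⟨γ, rfl⟩).symm
        rw [h]
        exact hcbij.mapsTo hp
      · intro X hX
        obtain ⟨p, hp, hpeq⟩ := hcbij.surjOn hX
        exact ⟨γ • p, ⟨p, hp, rfl⟩, by rw [← hpeq]; exact (Quot.sound ⟨γ, rfl⟩).symm⟩
end

section
/- Let L be a finite lattice and let P = L \ {⊥, ⊤} be its proper part. Let G be the reflexive comparability graph of P, i.e. the graph with vertex set P in which x is adjacent to y iff x ≤ y or y ≤ x (this is the graph Chain(P)^1). Then G is fine: for every subset M ⊆ P with M ≠ ∅ and ν(M) ≠ ∅, one has ν(M) ∩ ν(ν(M)) ≠ ∅. -/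
/-- A graph: a vertex set with a symmetric adjacency relation (loops allowed). -/
structure SymGraph (V : Type) where
  Adj : V → V → Prop
  symm : ∀ x y, Adj x y → Adj y x

/-- `nu G M` is the set of vertices adjacent to every vertex of `M`. -/
def SymGraph.nu {V : Type} (G : SymGraph V) (M : Set V) : Set V :=
  {v | ∀ u ∈ M, G.Adj u v}

/-- A graph is fine if for every `M` with `M ≠ ∅` and `ν(M) ≠ ∅` one has
`ν(M) ∩ ν(ν(M)) ≠ ∅`. -/
def SymGraph.Fine {V : Type} (G : SymGraph V) : Prop :=
  ∀ M : Set V, M.Nonempty → (G.nu M).Nonempty → (G.nu M ∩ G.nu (G.nu M)).Nonempty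

/-- The reflexive comparability graph of a poset: `x ~ y` iff `x ≤ y` or `y ≤ x`
(this is the graph `Chain(P)^1`). -/
def compGraph (P : Type) [PartialOrder P] : SymGraph P where
  Adj x y := x ≤ y ∨ y ≤ x
  symm _ _ h := h.symm

/-- the reflexive comparability graph of the proper part of a finite
lattice is fine. -/
theorem stmt_9 (L : Type) [Lattice L] [BoundedOrder L] [Fintype L] :
    (compGraph {x : L // x ≠ ⊥ ∧ x ≠ ⊤}).Fine := by
  classical
  letI : CompleteLattice L := Fintype.toCompleteLattice L
  intro M hM hA
  set G := compGraph {x : L // x ≠ ⊥ ∧ x ≠ ⊤} with hG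
  set A := G.nu M with hAdef
  set B := G.nu A with hBdef
  have hMB : M ⊆ B := fun m hm a ha => G.symm _ _ (ha m hm)
  have hB : B.Nonempty := hM.mono hMB
  have hAB : ∀ a ∈ A, ∀ b ∈ B, a ≤ b ∨ b ≤ a := fun a ha b hb => hb a ha
  set tB : L := sInf (Subtype.val '' B) with htBdef
  set tA : L := sInf (Subtype.val '' A) with htAdef
  have htB_le : ∀ b ∈ B, tB ≤ b.1 := fun b hb => sInf_le ⟨b, hb, rfl⟩
  have htA_le : ∀ a ∈ A, tA ≤ a.1 := fun a ha => sInf_le ⟨a, ha, rfl⟩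
  by_cases htB : tB ≠ ⊥
  · -- candidate: inf of B
    have htB_top : tB ≠ ⊤ := by
      obtain ⟨b, hb⟩ := hB
      intro h
      have h2 := htB_le b hb
      rw [h] at h2
      exact b.2.2 (top_le_iff.mp h2)
    refine ⟨⟨tB, htB, htB_top⟩, ?_, ?_⟩
    · intro m hm
      exact Or.inr (htB_le m (hMB hm))
    · intro a ha
      by_cases h : ∀ b ∈ B, a ≤ b
      · exact Or.inl (le_sInf (by rintro x ⟨b, hb, rfl⟩; exact h b hb))
      · push_neg at h
        obtain ⟨b, hb, hab⟩ := h
        have hba : b ≤ a := (hAB a ha b hb).resolve_left hab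
        exact Or.inr (le_trans (htB_le b hb) hba)
  · push_neg at htB
    by_cases htA : tA ≠ ⊥
    · -- candidate: inf of A
      have htA_top : tA ≠ ⊤ := by
        obtain ⟨a, ha⟩ := hA
        intro h
        have h2 := htA_le a ha
        rw [h] at h2
        exact a.2.2 (top_le_iff.mp h2)
      refine ⟨⟨tA, htA, htA_top⟩, ?_, ?_⟩
      · intro m hm
        by_cases h : ∀ a ∈ A, m ≤ a
        · exact Or.inl (le_sInf (by rintro x ⟨a, ha, rfl⟩; exact h a ha))
        · push_neg at h
          obtain ⟨a, ha, hma⟩ := h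
          have ham : a ≤ m := (hAB a ha m (hMB hm)).resolve_right hma
          exact Or.inr (le_trans (htA_le a ha) ham)
      · intro a ha
        exact Or.inr (htA_le a ha)
    · push_neg at htA
      exfalso
      have step : ∀ a ∈ A, ∃ a' ∈ A, a'.1 < a.1 := by
        intro a ha
        have h1 : ¬ ∀ b ∈ B, a ≤ b := by
          intro h
          have h2 : a.1 ≤ tB :=
            le_sInf (by rintro x ⟨b, hb, rfl⟩; exact h b hb)
          rw [htB] at h2
          exact a.2.1 (le_bot_iff.mp h2)
        push_neg at h1
        obtain ⟨b, hb, hab⟩ := h1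
        have hba : b ≤ a := (hAB a ha b hb).resolve_left hab
        have h3 : ¬ ∀ a' ∈ A, b ≤ a' := by
          intro h
          have h4 : b.1 ≤ tA :=
            le_sInf (by rintro x ⟨a', ha', rfl⟩; exact h a' ha')
          rw [htA] at h4
          exact b.2.1 (le_bot_iff.mp h4)
        push_neg at h3
        obtain ⟨a', ha', hba'⟩ := h3
        have ha'b : a' ≤ b := (hAB a' ha' b hb).resolve_right hba'
        refine ⟨a', ha', lt_of_le_of_lt (ha'b : a'.1 ≤ b.1) ?_⟩
        exact lt_of_le_not_ge (hba : b.1 ≤ a.1) (fun h => hab h)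
      obtain ⟨a0, ha0⟩ := hA
      have hfin : (Subtype.val '' A).Finite := Set.toFinite _
      obtain ⟨x, ⟨a, haA, hax⟩, hmin⟩ :=
        Set.Finite.exists_minimalFor id _ hfin ⟨a0.1, a0, ha0, rfl⟩
      obtain ⟨a', ha', hlt⟩ := step a haA
      rw [hax] at hlt
      have heq := hmin (j := a'.1) ⟨a', ha', rfl⟩ (le_of_lt hlt)
      simp only [id] at heq
      have hlt := lt_of_lt_of_le hlt heq
      exact lt_irrefl _ hlt
end

section
/- Let T be a finite graph with a right Z_2-action, let n ≥ 0 and m ≥ 3. Let C^1_{2m} be the reflexive cycle graph on the vertex set Z/2m (i adjacent to j iff i = j or i ≡ j ± 1 mod 2m), with left Z_2-action generated by i ↦ i + m and right Z_2-action generated by i ↦ 2m − 1 − i; let the twisted product T ×_{Z_2} C^1_{2m} carry the right Z_2-action induced by the right action on C^1_{2m} (i.e. [(t,c)]·τ = [(t, 2m−1−c)]). Let K_{n+2} and K_{n+3} carry the Z_2-action exchanging the vertices 1 and 2 and fixing all other vertices. If there exists a Z_2-equivariant graph homomorphism T → K_{n+2}, then there exists a Z_2-equivariant graph homomorphism T ×_{Z_2}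 C^1_{2m} → K_{n+3}. -/
/-- A graph: a vertex set with a symmetric adjacency relation (loops allowed). -/
structure LoopGraph (V : Type) where
  Adj : V → V → Prop
  symm : ∀ x y, Adj x y → Adj y x

/-- Graph homomorphisms. -/
def LoopGraph.IsHom {V W : Type} (G : LoopGraph V) (H : LoopGraph W) (f : V → W) : Prop :=
  ∀ v w, G.Adj v w → H.Adj (f v) (f w)

/-- The complete loopless graph `K_n` on `Fin n`. -/
def completeK (n : ℕ) : LoopGraph (Fin n) where
  Adj i j := i ≠ j
  symm _ _ h := h.symm

/-- The reflexive cycle graph `C¹_{2m}` on `ZMod (2m)`. -/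
def cycGraph (m : ℕ) : LoopGraph (ZMod (2 * m)) where
  Adj i j := i = j ∨ i = j + 1 ∨ j = i + 1
  symm i j h := by tauto

/-- The orbit relation of the diagonal `Z₂`-action on `T × C¹_{2m}`, where the
nontrivial element acts by `τ_T` on `T` and by `i ↦ i + m` on the cycle. -/
def twRelC {VT : Type} (tauT : VT → VT) (m : ℕ) (a b : VT × ZMod (2 * m)) : Prop :=
  a = b ∨ b = (tauT a.1, a.2 + (m : ZMod (2 * m)))

/-- The twisted product graph `T ×_{Z₂} C¹_{2m}`. -/
def twProdC {VT : Type} (T : LoopGraph VT) (tauT : VT → VT) (m : ℕ) :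
    LoopGraph (Quot (twRelC tauT m)) where
  Adj X Y := ∃ a b, Quot.mk _ a = X ∧ Quot.mk _ b = Y ∧
    T.Adj a.1 b.1 ∧ (cycGraph m).Adj a.2 b.2
  symm X Y h := by
    obtain ⟨a, b, ha, hb, h1, h2⟩ := h
    exact ⟨b, a, hb, ha, T.symm _ _ h1, (cycGraph m).symm _ _ h2⟩

/-- The right `Z₂`-action on `T ×_{Z₂} C¹_{2m}` induced by the reflection
`i ↦ 2m - 1 - i = -1 - i` of the cycle: `[(t,c)]·τ = [(t, -1-c)]`. -/
def cycAct {VT : Type} (tauT : VT → VT) (m : ℕ)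
    (X : Quot (twRelC tauT m)) : Quot (twRelC tauT m) :=
  Quot.lift (fun a : VT × ZMod (2 * m) => Quot.mk (twRelC tauT m) (a.1, -1 - a.2))
    (by
      rintro a b (rfl | hb)
      · rfl
      · subst hb
        have h2 : ((2 * m : ℕ) : ZMod (2 * m)) = 0 := ZMod.natCast_self _
        have h2c : (2 : ZMod (2 * m)) * (m : ZMod (2 * m)) = 0 := by push_cast at h2; linear_combination h2
        apply Quot.sound
        refine Or.inr ?_
        refine Prod.ext rfl ?_
        show -1 - (a.2 + (m : ZMod (2 * m))) = -1 - a.2 + (m : ZMod (2 * m))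
        linear_combination -h2c) X


section Aux
variable {n : ℕ}

private def emb3 (x : Fin (n+2)) : Fin (n+3) := Fin.castSucc x
private def lastc : Fin (n+3) := Fin.last (n+2)
private def s2 : Equiv.Perm (Fin (n+2)) := Equiv.swap 0 1
private def s3 : Equiv.Perm (Fin (n+3)) := Equiv.swap 0 1
private def L1f (x : Fin (n+2)) : Fin (n+3) := if x = 0 then lastc else emb3 x
private def M1f (x : Fin (n+2)) : Fin (n+3) := if x = 1 then lastc else emb3 x

private lemma emb3_inj : Function.Injective (emb3 (n:=n)) :=
  fun _ _ h => Fin.castSucc_injective _ h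

private lemma emb3_ne_last (x : Fin (n+2)) : emb3 x ≠ lastc :=
  (Fin.castSucc_lt_last x).ne

private lemma emb3_zero : emb3 (0 : Fin (n+2)) = 0 := rfl
private lemma emb3_one : emb3 (1 : Fin (n+2)) = 1 := by
  ext; simp [emb3, Fin.val_one]

private lemma fin_zero_ne_one2 : (0 : Fin (n+2)) ≠ 1 := by
  intro h; have := congrArg Fin.val h; simp [Fin.val_one] at this

private lemma fin_zero_ne_one3 : (0 : Fin (n+3)) ≠ 1 := by
  intro h; have := congrArg Fin.val h; simp [Fin.val_one] at this

private lemma lastc_ne_zero : lastc (n:=n) ≠ 0 := by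
  intro h; have := congrArg Fin.val h; simp [lastc] at this

private lemma lastc_ne_one : lastc (n:=n) ≠ 1 := by
  intro h; have := congrArg Fin.val h; simp [lastc, Fin.val_one] at this

private lemma s3_lastc : s3 (lastc (n:=n)) = lastc :=
  Equiv.swap_apply_of_ne_of_ne lastc_ne_zero lastc_ne_one

private lemma s2_s2 (x : Fin (n+2)) : s2 (s2 x) = x := Equiv.swap_apply_self _ _ _

private lemma s2_zero : s2 (0 : Fin (n+2)) = 1 := Equiv.swap_apply_left 0 1
private lemma s2_one : s2 (1 : Fin (n+2)) = 0 := Equiv.swap_apply_right 0 1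
private lemma s3_zero : s3 (0 : Fin (n+3)) = 1 := Equiv.swap_apply_left 0 1
private lemma s3_one : s3 (1 : Fin (n+3)) = 0 := Equiv.swap_apply_right 0 1
private lemma L1f_zero : L1f (0 : Fin (n+2)) = lastc := if_pos rfl
private lemma M1f_one : M1f (1 : Fin (n+2)) = lastc := if_pos rfl
private lemma L1f_of (x : Fin (n+2)) (h : x ≠ 0) : L1f x = emb3 x := if_neg h
private lemma M1f_of (x : Fin (n+2)) (h : x ≠ 1) : M1f x = emb3 x := if_neg h

private lemma s2_apply_of (x : Fin (n+2)) (h0 : x ≠ 0) (h1 : x ≠ 1) : s2 x = x :=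
  Equiv.swap_apply_of_ne_of_ne h0 h1

private lemma s3_emb3_of (x : Fin (n+2)) (h0 : x ≠ 0) (h1 : x ≠ 1) : s3 (emb3 x) = emb3 x := by
  refine Equiv.swap_apply_of_ne_of_ne ?_ ?_
  · rw [← emb3_zero]; exact fun h => h0 (emb3_inj h)
  · rw [← emb3_one]; exact fun h => h1 (emb3_inj h)

-- R1
private lemma R1 (x : Fin (n+2)) : M1f (s2 x) = s3 (L1f x) := by
  rcases eq_or_ne x 0 with rfl | h0
  · rw [s2_zero, M1f_one, L1f_zero, s3_lastc]
  rcases eq_or_ne x 1 with rfl | h1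
  · rw [s2_one, M1f_of 0 fin_zero_ne_one2, L1f_of 1 h0, emb3_zero, emb3_one, s3_one]
  · rw [s2_apply_of x h0 h1, M1f_of x h1, L1f_of x h0, s3_emb3_of x h0 h1]

-- R2
private lemma R2 (x : Fin (n+2)) : emb3 (s2 x) = s3 (emb3 x) := by
  rcases eq_or_ne x 0 with rfl | h0
  · rw [s2_zero, emb3_zero, emb3_one, s3_zero]
  rcases eq_or_ne x 1 with rfl | h1
  · rw [s2_one, emb3_zero, emb3_one, s3_one]
  · rw [s2_apply_of x h0 h1, s3_emb3_of x h0 h1]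

-- R3
private lemma R3 (x : Fin (n+2)) : L1f (s2 x) = s3 (M1f x) := by
  rcases eq_or_ne x 0 with rfl | h0
  · rw [s2_zero, L1f_of 1 fin_zero_ne_one2.symm, M1f_of 0 fin_zero_ne_one2,
      emb3_zero, emb3_one, s3_zero]
  rcases eq_or_ne x 1 with rfl | h1
  · rw [s2_one, L1f_zero, M1f_one, s3_lastc]
  · rw [s2_apply_of x h0 h1, L1f_of x h0, M1f_of x h1, s3_emb3_of x h0 h1]

private lemma s3_s3 (x : Fin (n+3)) : s3 (s3 x) = x := Equiv.swap_apply_self _ _ _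

-- injectivity/compatibility lemmas
private lemma I1 {x y : Fin (n+2)} (h : x ≠ y) : L1f x ≠ L1f y := by
  unfold L1f
  split_ifs with hx hy hy
  · exact absurd (hx.trans hy.symm) h
  · exact (emb3_ne_last y).symm
  · exact emb3_ne_last x
  · exact fun hc => h (emb3_inj hc)

private lemma I3 {x y : Fin (n+2)} (h : x ≠ y) : M1f x ≠ M1f y := by
  unfold M1f
  split_ifs with hx hy hy
  · exact absurd (hx.trans hy.symm) h
  · exact (emb3_ne_last y).symm
  · exact emb3_ne_last x
  · exact fun hc => h (emb3_inj hc)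

private lemma I4 {x y : Fin (n+2)} (h : x ≠ y) : L1f x ≠ emb3 y := by
  unfold L1f
  split_ifs with hx
  · exact (emb3_ne_last y).symm
  · exact fun hc => h (emb3_inj hc)

private lemma I5 {x y : Fin (n+2)} (h : x ≠ y) : M1f x ≠ emb3 y := by
  unfold M1f
  split_ifs with hx
  · exact (emb3_ne_last y).symm
  · exact fun hc => h (emb3_inj hc)

private lemma I6 {x y : Fin (n+2)} (h : x ≠ y) : M1f x ≠ L1f (s2 y) := by
  rcases eq_or_ne y 0 with rfl | hy0
  · rw [s2_zero, L1f_of 1 fin_zero_ne_one2.symm, emb3_one]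
    rcases eq_or_ne x 1 with rfl | hx1
    · rw [M1f_one]; exact lastc_ne_one
    · rw [M1f_of x hx1]
      exact fun hc => hx1 (emb3_inj (by rw [hc, emb3_one]))
  rcases eq_or_ne y 1 with rfl | hy1
  · rw [s2_one, L1f_zero, M1f_of x h]
    exact emb3_ne_last x
  · rw [s2_apply_of y hy0 hy1, L1f_of y hy0]
    rcases eq_or_ne x 1 with rfl | hx1
    · rw [M1f_one]; exact (emb3_ne_last y).symm
    · rw [M1f_of x hx1]; exact fun hc => h (emb3_inj hc)


private def Gc (m k : ℕ) (a b : Fin (n+2)) : Fin (n+3) :=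
  if k = 0 then L1f a
  else if k < m - 1 then emb3 a
  else if k = m - 1 then M1f a
  else if k = m then L1f b
  else if k < 2*m - 1 then emb3 b
  else M1f b

variable {m : ℕ}

private lemma gc0 (a b : Fin (n+2)) : Gc m 0 a b = L1f a := by simp [Gc]

private lemma gcA (hm : 3 ≤ m) {k : ℕ} (h1 : 1 ≤ k) (h2 : k ≤ m - 2) (a b : Fin (n+2)) :
    Gc m k a b = emb3 a := by
  unfold Gc; rw [if_neg (by omega), if_pos (by omega)]

private lemma gcB (hm : 3 ≤ m) (a b : Fin (n+2)) : Gc m (m-1) a b = M1f a := by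
  unfold Gc; rw [if_neg (by omega), if_neg (by omega), if_pos rfl]

private lemma gcC (hm : 3 ≤ m) (a b : Fin (n+2)) : Gc m m a b = L1f b := by
  unfold Gc; rw [if_neg (by omega), if_neg (by omega), if_neg (by omega), if_pos rfl]

private lemma gcD (hm : 3 ≤ m) {k : ℕ} (h1 : m + 1 ≤ k) (h2 : k ≤ 2*m - 2) (a b : Fin (n+2)) :
    Gc m k a b = emb3 b := by
  unfold Gc
  rw [if_neg (by omega), if_neg (by omega), if_neg (by omega), if_neg (by omega),
    if_pos (by omega)]

private lemma gcE (hm : 3 ≤ m) (a b : Fin (n+2)) : Gc m (2*m-1) a b = M1f b := by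
  unfold Gc
  rw [if_neg (by omega), if_neg (by omega), if_neg (by omega), if_neg (by omega),
    if_neg (by omega)]

private lemma keySame {m k : ℕ} (hm : 3 ≤ m) (hk : k < 2*m)
    {a a' : Fin (n+2)} (ha : a ≠ a') :
    Gc m k a (s2 a) ≠ Gc m k a' (s2 a') := by
  have hs : s2 a ≠ s2 a' := fun hc => ha (s2.injective hc)
  rcases (by omega : k = 0 ∨ (1 ≤ k ∧ k ≤ m-2) ∨ k = m-1 ∨ k = m ∨
      (m+1 ≤ k ∧ k ≤ 2*m-2) ∨ k = 2*m-1) with rfl | ⟨h1,h2⟩ | rfl | rfl | ⟨h1,h2⟩ | rfl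
  · rw [gc0, gc0]; exact I1 ha
  · rw [gcA hm h1 h2 _ _, gcA hm h1 h2 _ _]; exact fun hc => ha (emb3_inj hc)
  · rw [gcB hm, gcB hm]; exact I3 ha
  · rw [gcC hm, gcC hm]; exact I1 hs
  · rw [gcD hm h1 h2 _ _, gcD hm h1 h2 _ _]; exact fun hc => hs (emb3_inj hc)
  · rw [gcE hm, gcE hm]; exact I3 hs

private lemma keySucc {m k : ℕ} (hm : 3 ≤ m) (hk : k + 1 < 2*m)
    {a a' : Fin (n+2)} (ha : a ≠ a') :
    Gc m k a (s2 a) ≠ Gc m (k+1) a' (s2 a') := by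
  have hs : s2 a ≠ s2 a' := fun hc => ha (s2.injective hc)
  rcases (by omega : k = 0 ∨ (1 ≤ k ∧ k ≤ m-3) ∨ k = m-2 ∨ k = m-1 ∨ k = m ∨
      (m+1 ≤ k ∧ k ≤ 2*m-3) ∨ k = 2*m-2)
    with rfl | ⟨h1,h2⟩ | rfl | rfl | rfl | ⟨h1,h2⟩ | rfl
  · rw [gc0, gcA hm (by omega) (by omega) _ _]; exact I4 ha
  · rw [gcA hm (by omega) (by omega) _ _, gcA hm (by omega) (by omega) _ _]
    exact fun hc => ha (emb3_inj hc)
  · rw [gcA hm (by omega) (by omega) _ _, show m - 2 + 1 = m - 1 by omega, gcB hm]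
    exact (I5 ha.symm).symm
  · rw [gcB hm, show m - 1 + 1 = m by omega, gcC hm]
    exact I6 ha
  · rw [gcC hm, gcD hm (by omega) (by omega) _ _]
    exact I4 hs
  · rw [gcD hm (by omega) (by omega) _ _, gcD hm (by omega) (by omega) _ _]
    exact fun hc => hs (emb3_inj hc)
  · rw [gcD hm (by omega) (by omega) _ _, show 2*m - 2 + 1 = 2*m - 1 by omega, gcE hm]
    exact (I5 hs.symm).symm

private lemma keyWrap {m : ℕ} (hm : 3 ≤ m)
    {a a' : Fin (n+2)} (ha : a ≠ a') :
    Gc m (2*m-1) a (s2 a) ≠ Gc m 0 a' (s2 a') := by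
  have hs : s2 a ≠ s2 a' := fun hc => ha (s2.injective hc)
  rw [gcE hm, gc0]
  have := I6 (x := s2 a) (y := s2 a') hs
  rwa [s2_s2] at this

private lemma key {m k k' : ℕ} (hm : 3 ≤ m) (hk : k < 2*m) (hk' : k' < 2*m)
    (hadj : k = k' ∨ k' = (k+1) % (2*m) ∨ k = (k'+1) % (2*m))
    {a a' : Fin (n+2)} (ha : a ≠ a') :
    Gc m k a (s2 a) ≠ Gc m k' a' (s2 a') := by
  rcases hadj with rfl | h | h
  · exact keySame hm hk ha
  · rcases Nat.lt_or_ge (k+1) (2*m) with hlt | hge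
    · rw [Nat.mod_eq_of_lt hlt] at h; subst h
      exact keySucc hm hlt ha
    · have hk1 : k = 2*m - 1 := by omega
      have : (k+1) % (2*m) = 0 := by
        rw [show k + 1 = 2*m by omega, Nat.mod_self]
      rw [this] at h; subst h; subst hk1
      exact keyWrap hm ha
  · rcases Nat.lt_or_ge (k'+1) (2*m) with hlt | hge
    · rw [Nat.mod_eq_of_lt hlt] at h; subst h
      exact (keySucc hm hlt ha.symm).symm
    · have hk1 : k' = 2*m - 1 := by omega
      have : (k'+1) % (2*m) = 0 := by
        rw [show k' + 1 = 2*m by omega, Nat.mod_self]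
      rw [this] at h; subst h; subst hk1
      exact (keyWrap hm ha.symm).symm

private lemma shiftGc {m k : ℕ} (hm : 3 ≤ m) (hk : k < 2*m) (a b : Fin (n+2)) :
    Gc m ((k+m) % (2*m)) b a = Gc m k a b := by
  rcases Nat.lt_or_ge k m with hlt | hge
  · have hmod : (k+m) % (2*m) = k+m := Nat.mod_eq_of_lt (by omega)
    rw [hmod]
    rcases (by omega : k = 0 ∨ (1 ≤ k ∧ k ≤ m-2) ∨ k = m-1) with rfl | ⟨h1,h2⟩ | rfl
    · rw [gc0, show 0+m = m from by omega, gcC hm]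
    · rw [gcA hm h1 h2 _ _, gcD hm (by omega) (by omega) _ _]
    · rw [gcB hm, show m-1+m = 2*m-1 by omega, gcE hm]
  · have hmod : (k+m) % (2*m) = k-m := by
      rw [show k + m = (k - m) + 1 * (2*m) by omega, Nat.add_mul_mod_self_right,
        Nat.mod_eq_of_lt (by omega)]
    rw [hmod]
    rcases (by omega : k = m ∨ (m+1 ≤ k ∧ k ≤ 2*m-2) ∨ k = 2*m-1) with rfl | ⟨h1,h2⟩ | rfl
    · rw [Nat.sub_self, gc0, gcC hm]
    · rw [gcA hm (by omega) (by omega) _ _, gcD hm h1 h2 _ _]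
    · rw [show 2*m-1-m = m-1 by omega, gcB hm, gcE hm]

private lemma reflGc {m k : ℕ} (hm : 3 ≤ m) (hk : k < 2*m) (a : Fin (n+2)) :
    Gc m (2*m - 1 - k) a (s2 a) = s3 (Gc m k a (s2 a)) := by
  rcases (by omega : k = 0 ∨ (1 ≤ k ∧ k ≤ m-2) ∨ k = m-1 ∨ k = m ∨
      (m+1 ≤ k ∧ k ≤ 2*m-2) ∨ k = 2*m-1) with rfl | ⟨h1,h2⟩ | rfl | rfl | ⟨h1,h2⟩ | rfl
  · rw [gc0, show 2*m-1-0 = 2*m-1 by omega, gcE hm]; exact R1 a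
  · rw [gcA hm h1 h2 _ _, gcD hm (by omega) (by omega) _ _]; exact R2 a
  · rw [gcB hm, show 2*m-1-(m-1) = m by omega, gcC hm]; exact R3 a
  · rw [show 2*k-1-k = k-1 by omega, gcB hm, gcC hm, R3 a, s3_s3]
  · rw [gcD hm h1 h2 _ _, gcA hm (by omega) (by omega) _ _]
    have := R2 (s2 a); rwa [s2_s2] at this
  · rw [gcE hm, show 2*m-1-(2*m-1) = 0 by omega, gc0]
    have := R3 (s2 a); rwa [s2_s2] at this



end Aux

/-- if there is a `Z₂`-equivariant homomorphism `T → K_{n+2}` (with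
`Z₂` exchanging the first two vertices of the complete graph), then there is a
`Z₂`-equivariant homomorphism `T ×_{Z₂} C¹_{2m} → K_{n+3}` (for `m ≥ 3`). -/
theorem stmt_15 {VT : Type} [Fintype VT] (T : LoopGraph VT)
    (tauT : VT → VT) (htauinv : Function.Involutive tauT)
    (htauadj : T.IsHom T tauT)
    (m n : ℕ) (hm : 3 ≤ m)
    (hcol : ∃ f : VT → Fin (n + 2), T.IsHom (completeK (n + 2)) f ∧
      ∀ t, f (tauT t) = Equiv.swap 0 1 (f t)) :
    ∃ g : Quot (twRelC tauT m) → Fin (n + 3),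
      (twProdC T tauT m).IsHom (completeK (n + 3)) g ∧
      ∀ X, g (cycAct tauT m X) = Equiv.swap 0 1 (g X) := by
  obtain ⟨f, hf, hfe⟩ := hcol
  haveI : NeZero (2*m) := ⟨by omega⟩
  haveI : Fact (1 < 2*m) := ⟨by omega⟩
  set F : VT × ZMod (2*m) → Fin (n+3) :=
    fun a => Gc m a.2.val (f a.1) (f (tauT a.1)) with hF
  have hfe' : ∀ t, f (tauT t) = s2 (f t) := hfe
  have hwd : ∀ a b, twRelC tauT m a b → F a = F b := by
    rintro a b (rfl | rfl)
    · rfl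
    · show Gc m a.2.val (f a.1) (f (tauT a.1)) =
        Gc m ((a.2 + (m : ZMod (2*m))).val) (f (tauT a.1)) (f (tauT (tauT a.1)))
      rw [htauinv a.1]
      have hv : (a.2 + (m : ZMod (2*m))).val = (a.2.val + m) % (2*m) := by
        rw [ZMod.val_add, ZMod.val_natCast_of_lt (by omega)]
      rw [hv]
      exact (shiftGc hm (ZMod.val_lt a.2) (f a.1) (f (tauT a.1))).symm
  refine ⟨Quot.lift F hwd, ?_, ?_⟩
  · rintro X Y ⟨a, b, rfl, rfl, h1, h2⟩
    show F a ≠ F b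
    have hff : f a.1 ≠ f b.1 := hf _ _ h1
    have hadj : a.2.val = b.2.val ∨ b.2.val = (a.2.val + 1) % (2*m) ∨
        a.2.val = (b.2.val + 1) % (2*m) := by
      rcases h2 with h | h | h
      · exact Or.inl (congrArg ZMod.val h)
      · refine Or.inr (Or.inr ?_)
        rw [h, ZMod.val_add, ZMod.val_one]
      · refine Or.inr (Or.inl ?_)
        rw [h, ZMod.val_add, ZMod.val_one]
    show Gc m a.2.val (f a.1) (f (tauT a.1)) ≠ Gc m b.2.val (f b.1) (f (tauT b.1))
    rw [hfe' a.1, hfe' b.1]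
    exact key hm (ZMod.val_lt a.2) (ZMod.val_lt b.2) hadj hff
  · intro X
    obtain ⟨a⟩ := X
    show F (a.1, -1 - a.2) = Equiv.swap 0 1 (F a)
    have hk : a.2.val < 2*m := ZMod.val_lt a.2
    have h1 : ((2*m - 1 - a.2.val : ℕ) : ZMod (2*m)) = -1 - a.2 := by
      have hself : ((2*m : ℕ) : ZMod (2*m)) = 0 := ZMod.natCast_self _
      have hval : ((a.2.val : ℕ) : ZMod (2*m)) = a.2 := ZMod.natCast_rightInverse a.2
      have h2 : (2*m - 1 - a.2.val) + a.2.val + 1 = 2*m := by omega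
      have h3 := congrArg (Nat.cast : ℕ → ZMod (2*m)) h2
      push_cast at h3
      rw [hval] at h3
      have h4 : (2 : ZMod (2*m)) * m = 0 := by push_cast at hself; linear_combination hself
      linear_combination h3 + h4
    have hv : (-1 - a.2 : ZMod (2*m)).val = 2*m - 1 - a.2.val := by
      rw [← h1]; exact ZMod.val_natCast_of_lt (by omega)
    show Gc m ((-1 - a.2 : ZMod (2*m)).val) (f a.1) (f (tauT a.1)) =
      Equiv.swap 0 1 (Gc m a.2.val (f a.1) (f (tauT a.1)))
    rw [hv, hfe' a.1]
    exact reflGc hm hk (f a.1)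
end
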